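/- If 𝓑 ⊆ 2^V \ {V} is a Sperner family of nonempty sets with |𝓑| = m, then OPT_B(𝓑) = m and OPT_BA(𝓑) = Σ_{B∈𝓑} |B|. -/
import Mathlib


open Finset

variable {V : Type*} [Fintype V] [DecidableEq V]

/-- A pure Horn CNF is a finite set of clauses `(B, v)`: body `B`, head `v`,
with `B` nonempty and `v ∉ B`. -/
def PureHorn (Φ : Finset (Finset V × V)) : Prop :=
  ∀ c ∈ Φ, c.1.Nonempty ∧ c.2 ∉ c.1

/-- A set `W` is closed under the clauses of `Φ`. -/
def HornClosed (Φ : Finset (Finset V × V)) (W : Set V) : Prop :=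
  ∀ c ∈ Φ, ↑c.1 ⊆ W → c.2 ∈ W

/-- Forward-chaining closure `F_Φ(Z)`: the smallest set containing `Z`
that is closed under the clauses of `Φ`. -/
def hornClosure (Φ : Finset (Finset V × V)) (Z : Set V) : Set V :=
  ⋂₀ {W : Set V | Z ⊆ W ∧ HornClosed Φ W}

/-- `Ψ_𝓑 = ⋀_{B ∈ 𝓑} B → (V \ B)`. -/
def keyCNF (𝓑 : Finset (Finset V)) : Finset (Finset V × V) :=
  𝓑.biUnion fun B => (Finset.univ \ B).image fun v => (B, v)

/-- `Φ` represents the key Horn function `h_𝓑`, i.e. `Φ` is a pure Horn CNF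
equivalent to `Ψ_𝓑`. -/
def Represents (𝓑 : Finset (Finset V)) (Φ : Finset (Finset V × V)) : Prop :=
  PureHorn Φ ∧ ∀ Z : Finset V, hornClosure Φ ↑Z = hornClosure (keyCNF 𝓑) ↑Z

/-- (B) number of (distinct) bodies. -/
def sizeB (Φ : Finset (Finset V × V)) : ℕ := (Φ.image Prod.fst).card
/-- (BA) body area `Σ_i |B_i|` over the distinct bodies. -/
def sizeBA (Φ : Finset (Finset V × V)) : ℕ := ∑ B ∈ Φ.image Prod.fst, B.card
/-- (C) number of clauses `Σ_i |H_i|`. -/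
def sizeC (Φ : Finset (Finset V × V)) : ℕ := Φ.card
/-- (TA) total area `Σ_i (|B_i| + |H_i|)`. -/
def sizeTA (Φ : Finset (Finset V × V)) : ℕ := sizeBA Φ + sizeC Φ
/-- (BC) bodies plus clauses `Σ_i (|H_i| + 1)`. -/
def sizeBC (Φ : Finset (Finset V × V)) : ℕ := sizeB Φ + sizeC Φ
/-- (L) number of literals `Σ_i (|B_i| + 1)·|H_i|`. -/
def sizeL (Φ : Finset (Finset V × V)) : ℕ := ∑ c ∈ Φ, (c.1.card + 1)

/-- `μ` is one of the six size measures. -/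
def IsMeasure (μ : Finset (Finset V × V) → ℕ) : Prop :=
  μ = sizeB ∨ μ = sizeBA ∨ μ = sizeTA ∨ μ = sizeC ∨ μ = sizeBC ∨ μ = sizeL

/-- `OPT_μ(𝓑)`: minimum `μ`-size of a CNF representing `h_𝓑`. -/
noncomputable def OPT (μ : Finset (Finset V × V) → ℕ) (𝓑 : Finset (Finset V)) : ℕ :=
  sInf {s : ℕ | ∃ Φ : Finset (Finset V × V), Represents 𝓑 Φ ∧ μ Φ = s}

/-- `price_μ(S,T)`: minimum `μ`-size of a pure Horn CNF with bodies in `𝓑`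
whose forward chaining from `S` reaches all of `T`. -/
noncomputable def price (μ : Finset (Finset V × V) → ℕ) (𝓑 : Finset (Finset V))
    (S T : Finset V) : ℕ :=
  sInf {s : ℕ | ∃ Φ : Finset (Finset V × V),
    PureHorn Φ ∧ (∀ c ∈ Φ, c.1 ∈ 𝓑) ∧ ↑T ⊆ hornClosure Φ ↑S ∧ μ Φ = s}

lemma hc_subset (Φ : Finset (Finset V × V)) (Z : Set V) : Z ⊆ hornClosure Φ Z :=
  Set.subset_sInter fun _ hW => hW.1

lemma hc_closed (Φ : Finset (Finset V × V)) (Z : Set V) :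
    HornClosed Φ (hornClosure Φ Z) := by
  intro c hc hsub W hW
  exact hW.2 c hc fun x hx => Set.mem_sInter.mp (hsub hx) W hW

lemma hc_eq_of_closed {Φ : Finset (Finset V × V)} {Z : Set V} (h : HornClosed Φ Z) :
    hornClosure Φ Z = Z :=
  subset_antisymm (Set.sInter_subset_of_mem ⟨subset_rfl, h⟩) (hc_subset Φ Z)

lemma mem_keyCNF {𝓑 : Finset (Finset V)} {B : Finset V} {v : V} :
    (B, v) ∈ keyCNF 𝓑 ↔ B ∈ 𝓑 ∧ v ∉ B := by
  simp [keyCNF, Finset.mem_biUnion, Finset.mem_image, Finset.mem_sdiff]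

lemma key_closure_univ {𝓑 : Finset (Finset V)} {B : Finset V} (h : B ∈ 𝓑) :
    hornClosure (keyCNF 𝓑) ↑B = Set.univ := by
  apply Set.eq_univ_of_forall
  intro v
  by_cases hv : v ∈ B
  · exact hc_subset _ _ hv
  · exact hc_closed (keyCNF 𝓑) ↑B (B, v) (mem_keyCNF.mpr ⟨h, hv⟩) (hc_subset _ _)

lemma key_closure_self {𝓑 : Finset (Finset V)} {Z : Finset V}
    (h : ∀ B ∈ 𝓑, ¬ B ⊆ Z) : hornClosure (keyCNF 𝓑) ↑Z = ↑Z := by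
  apply hc_eq_of_closed
  rintro ⟨B, v⟩ hc hsub
  exact absurd (Finset.coe_subset.mp hsub) (h B (mem_keyCNF.mp hc).1)

lemma bodies_sub {𝓑 : Finset (Finset V)} {Φ : Finset (Finset V × V)}
    (hrep : Represents 𝓑 Φ) (hproper : ∀ B ∈ 𝓑, B ≠ Finset.univ)
    (hsperner : ∀ B ∈ 𝓑, ∀ B' ∈ 𝓑, B ⊆ B' → B = B') :
    𝓑 ⊆ Φ.image Prod.fst := by
  intro B hB
  have hcl : hornClosure Φ ↑B = Set.univ := (hrep.2 B).trans (key_closure_univ hB)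
  -- there is a clause with body ⊆ B and head outside B
  have hex : ∃ c ∈ Φ, c.1 ⊆ B ∧ c.2 ∉ B := by
    by_contra hno
    push_neg at hno
    have hclosed : HornClosed Φ ↑B := by
      intro c hc hsub
      exact hno c hc (Finset.coe_subset.mp hsub)
    have := hc_eq_of_closed hclosed
    rw [hcl] at this
    obtain ⟨v, hv⟩ := Finset.not_subset.mp
      fun hsub => hproper B hB (Finset.univ_subset_iff.mp hsub)
    exact hv.2 (by simpa using (this ▸ Set.mem_univ v : v ∈ (↑B : Set V)))
  obtain ⟨c, hcΦ, hsub, hhead⟩ := hex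
  -- closure of c.1 under Φ contains c.2 ∉ c.1, so some B'' ∈ 𝓑 with B'' ⊆ c.1
  have hhead' : c.2 ∈ hornClosure Φ ↑c.1 :=
    hc_closed Φ ↑c.1 c hcΦ (hc_subset _ _)
  have hnself : hornClosure (keyCNF 𝓑) ↑c.1 ≠ ↑c.1 := by
    intro heq
    rw [hrep.2 c.1, heq] at hhead'
    exact hhead (hsub (by simpa using hhead'))
  have hex2 : ∃ B'' ∈ 𝓑, B'' ⊆ c.1 := by
    by_contra hno
    push_neg at hno
    exact hnself (key_closure_self hno)
  obtain ⟨B'', hB'', hsub2⟩ := hex2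
  have hBB : B'' = B := hsperner B'' hB'' B hB (hsub2.trans hsub)
  have hc1 : c.1 = B := subset_antisymm hsub (hBB ▸ hsub2)
  exact Finset.mem_image.mpr ⟨c, hcΦ, hc1⟩

lemma key_bodies {𝓑 : Finset (Finset V)} (hproper : ∀ B ∈ 𝓑, B ≠ Finset.univ) :
    (keyCNF 𝓑).image Prod.fst = 𝓑 := by
  ext B
  simp only [Finset.mem_image]
  constructor
  · rintro ⟨⟨B', v⟩, hc, rfl⟩
    exact (mem_keyCNF.mp hc).1
  · intro hB
    obtain ⟨v, hv⟩ := Finset.sdiff_nonempty.mpr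
      fun hsub => hproper B hB (Finset.univ_subset_iff.mp hsub)
    exact ⟨(B, v), mem_keyCNF.mpr ⟨hB, (Finset.mem_sdiff.mp hv).2⟩, rfl⟩

lemma key_represents {𝓑 : Finset (Finset V)} (hne : ∀ B ∈ 𝓑, B.Nonempty) :
    Represents 𝓑 (keyCNF 𝓑) := by
  refine ⟨?_, fun Z => rfl⟩
  rintro ⟨B, v⟩ hc
  obtain ⟨h1, h2⟩ := mem_keyCNF.mp hc
  exact ⟨hne B h1, h2⟩

/-- For a Sperner family `𝓑` of nonempty proper subsets of `V` with
`|𝓑| = m`, `OPT_B(𝓑) = m` and `OPT_BA(𝓑) = Σ_{B ∈ 𝓑} |B|`. -/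
theorem stmt1 {V : Type*} [Fintype V] [DecidableEq V]
    (𝓑 : Finset (Finset V)) (m : ℕ) (hm : 𝓑.card = m)
    (hne : ∀ B ∈ 𝓑, B.Nonempty) (hproper : ∀ B ∈ 𝓑, B ≠ Finset.univ)
    (hsperner : ∀ B ∈ 𝓑, ∀ B' ∈ 𝓑, B ⊆ B' → B = B') :
    OPT sizeB 𝓑 = m ∧ OPT sizeBA 𝓑 = ∑ B ∈ 𝓑, B.card := by
  have hrepkey := key_represents hne
  have hbodies := key_bodies hproper
  constructor
  · apply le_antisymm
    · exact Nat.sInf_le ⟨keyCNF 𝓑, hrepkey, by rw [sizeB, hbodies, hm]⟩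
    · have hnem : {s : ℕ | ∃ Φ : Finset (Finset V × V), Represents 𝓑 Φ ∧ sizeB Φ = s}.Nonempty :=
        ⟨m, keyCNF 𝓑, hrepkey, by rw [sizeB, hbodies, hm]⟩
      obtain ⟨Φ, hrep, hsize⟩ := Nat.sInf_mem hnem
      rw [OPT, ← hsize, sizeB, ← hm]
      exact Finset.card_le_card (bodies_sub hrep hproper hsperner)
  · apply le_antisymm
    · exact Nat.sInf_le ⟨keyCNF 𝓑, hrepkey, by rw [sizeBA, hbodies]⟩
    · have hnem : {s : ℕ | ∃ Φ : Finset (Finset V × V), Represents 𝓑 Φ ∧ sizeBA Φ = s}.Nonempty :=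
        ⟨∑ B ∈ 𝓑, B.card, keyCNF 𝓑, hrepkey, by rw [sizeBA, hbodies]⟩
      obtain ⟨Φ, hrep, hsize⟩ := Nat.sInf_mem hnem
      rw [OPT, ← hsize, sizeBA]
      exact Finset.sum_le_sum_of_subset (bodies_sub hrep hproper hsperner)
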